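/- arXiv:2107.09770 — 7 statements merged into one kernel-verified Lean document; each statement's English description precedes it below -/
import Mathlib

section
/- Let (L, R, E) be a bipartite graph with costs c : L × R → ℝ, let ŷ be an arbitrary dual assignment and let y* be any feasible dual solution. Define F = {(i,j) ∈ E : ŷ_L(i) + ŷ_R(j) > c(i,j)} and r(i,j) = ŷ_L(i) + ŷ_R(j) − c(i,j) for (i,j) ∈ F. Then the assignment δ defined by δ_L(i) = max(ŷ_L(i) − y*_L(i), 0) and δ_R(j) = max(ŷ_R(j) − y*_R(j), 0) is nonnegative, satisfies δ_L(i) + δ_R(j) ≥ r(i,j) for every (i,j) ∈ F, and has total value Σ_{i∈L} δ_L(i) + Σ_{j∈R} δ_R(j) ≤ Σ_{i∈L} |ŷ_L(i) − y*_L(i)| + Σ_{j∈R} |ŷ_R(j) − y*_R(j)| = ‖ŷ − y*‖₁. Consequently the optimum of the distance-to-feasibility covering LP (minimize Σ_v δ_v subject to δ ≥ 0 and δ_L(i) + δ_R(j) ≥ r(i,j) for (i,j) ∈ F) is at most ‖ŷ − y*‖₁. -/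
/-- The perturbation `δ = max(ŷ − y*, 0)` is nonnegative, covers the
infeasibility amounts on all violated edges, and has total value at most
`‖ŷ − y*‖₁`; hence the distance-to-feasibility covering LP has optimum at most
`‖ŷ − y*‖₁`. -/
theorem truncated_difference_covers
    {L R : Type*} [Fintype L] [Fintype R]
    (E : Set (L × R)) (c : L × R → ℝ)
    (yL : L → ℝ) (yR : R → ℝ)           -- the prediction ŷ
    (ysL : L → ℝ) (ysR : R → ℝ)         -- a feasible dual y*
    (hfeas : ∀ e ∈ E, ysL e.1 + ysR e.2 ≤ c e) :
    (∀ i, 0 ≤ max (yL i - ysL i) 0) ∧ (∀ j, 0 ≤ max (yR j - ysR j) 0) ∧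
    (∀ e ∈ E, yL e.1 + yR e.2 > c e →
      max (yL e.1 - ysL e.1) 0 + max (yR e.2 - ysR e.2) 0 ≥
        yL e.1 + yR e.2 - c e) ∧
    (∑ i, max (yL i - ysL i) 0 + ∑ j, max (yR j - ysR j) 0 ≤
      ∑ i, |yL i - ysL i| + ∑ j, |yR j - ysR j|) ∧
    (∃ δL : L → ℝ, ∃ δR : R → ℝ,
      (∀ i, 0 ≤ δL i) ∧ (∀ j, 0 ≤ δR j) ∧
      (∀ e ∈ E, yL e.1 + yR e.2 > c e →
        δL e.1 + δR e.2 ≥ yL e.1 + yR e.2 - c e) ∧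
      ∑ i, δL i + ∑ j, δR j ≤ ∑ i, |yL i - ysL i| + ∑ j, |yR j - ysR j|) := by
  have cover : ∀ e ∈ E, yL e.1 + yR e.2 > c e →
      max (yL e.1 - ysL e.1) 0 + max (yR e.2 - ysR e.2) 0 ≥
        yL e.1 + yR e.2 - c e := by
    intro e he _
    have := hfeas e he
    have h1 : yL e.1 - ysL e.1 ≤ max (yL e.1 - ysL e.1) 0 := le_max_left _ _
    have h2 : yR e.2 - ysR e.2 ≤ max (yR e.2 - ysR e.2) 0 := le_max_left _ _
    linarith
  have sumle : ∑ i, max (yL i - ysL i) 0 + ∑ j, max (yR j - ysR j) 0 ≤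
      ∑ i, |yL i - ysL i| + ∑ j, |yR j - ysR j| := by
    gcongr with i _ j _
    · exact max_le (le_abs_self _) (abs_nonneg _)
    · exact max_le (le_abs_self _) (abs_nonneg _)
  exact ⟨fun i => le_max_right _ _, fun j => le_max_right _ _, cover, sumle,
    fun i => max (yL i - ysL i) 0, fun j => max (yR j - ysR j) 0,
    fun i => le_max_right _ _, fun j => le_max_right _ _, cover, sumle⟩
end

section
/- Let (L, R, E) be a bipartite graph with costs c : L × R → ℝ, let ŷ be an arbitrary dual assignment, and let y* be a feasible dual solution. Define F = {(i,j) ∈ E : ŷ_L(i) + ŷ_R(j) > c(i,j)} and r(i,j) = ŷ_L(i) + ŷ_R(j) − c(i,j) for (i,j) ∈ F. Suppose δ ≥ 0 satisfies δ_L(i) + δ_R(j) ≥ r(i,j) for every (i,j) ∈ F, and suppose δ is a 2-approximation to the covering LP, i.e. Σ_v δ_v ≤ 2 · Σ_v δ'_v for every nonnegative δ' satisfying δ'_L(i) + δ'_R(j) ≥ r(i,j) for all (i,j) ∈ F. Then ŷ' := ŷ − δ is a feasible dual, ‖ŷ' − ŷ‖₁ ≤ 2‖ŷ − y*‖₁,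 and ‖ŷ' − y*‖₁ ≤ 3‖ŷ − y*‖₁. -/
/-- If `δ ≥ 0` covers the infeasibility amounts and is a 2-approximation to the
covering LP, then `ŷ' = ŷ − δ` is feasible, `‖ŷ' − ŷ‖₁ ≤ 2‖ŷ − y*‖₁`, and
`‖ŷ' − y*‖₁ ≤ 3‖ŷ − y*‖₁`. -/
theorem two_approx_projection_bounds
    {L R : Type*} [Fintype L] [Fintype R]
    (E : Set (L × R)) (c : L × R → ℝ)
    (yL : L → ℝ) (yR : R → ℝ)           -- the prediction ŷ
    (ysL : L → ℝ) (ysR : R → ℝ)         -- a feasible dual y*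
    (hfeas : ∀ e ∈ E, ysL e.1 + ysR e.2 ≤ c e)
    (δL : L → ℝ) (δR : R → ℝ)
    (hδL : ∀ i, 0 ≤ δL i) (hδR : ∀ j, 0 ≤ δR j)
    (hcover : ∀ e ∈ E, yL e.1 + yR e.2 > c e →
      δL e.1 + δR e.2 ≥ yL e.1 + yR e.2 - c e)
    (happrox : ∀ δL' : L → ℝ, ∀ δR' : R → ℝ,
      (∀ i, 0 ≤ δL' i) → (∀ j, 0 ≤ δR' j) →
      (∀ e ∈ E, yL e.1 + yR e.2 > c e →
        δL' e.1 + δR' e.2 ≥ yL e.1 + yR e.2 - c e) →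
      ∑ i, δL i + ∑ j, δR j ≤ 2 * (∑ i, δL' i + ∑ j, δR' j)) :
    (∀ e ∈ E, (yL e.1 - δL e.1) + (yR e.2 - δR e.2) ≤ c e) ∧
    (∑ i, |(yL i - δL i) - yL i| + ∑ j, |(yR j - δR j) - yR j| ≤
      2 * (∑ i, |yL i - ysL i| + ∑ j, |yR j - ysR j|)) ∧
    (∑ i, |(yL i - δL i) - ysL i| + ∑ j, |(yR j - δR j) - ysR j| ≤
      3 * (∑ i, |yL i - ysL i| + ∑ j, |yR j - ysR j|)) := by
  have key : ∑ i, δL i + ∑ j, δR j ≤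
      2 * (∑ i, |yL i - ysL i| + ∑ j, |yR j - ysR j|) := by
    apply happrox (fun i => |yL i - ysL i|) (fun j => |yR j - ysR j|)
      (fun i => abs_nonneg _) (fun j => abs_nonneg _)
    intro e he hv
    have h1 := hfeas e he
    have h2 : yL e.1 + yR e.2 - c e ≤ (yL e.1 - ysL e.1) + (yR e.2 - ysR e.2) := by
      linarith
    calc yL e.1 + yR e.2 - c e ≤ (yL e.1 - ysL e.1) + (yR e.2 - ysR e.2) := h2
      _ ≤ |yL e.1 - ysL e.1| + |yR e.2 - ysR e.2| :=
        add_le_add (le_abs_self _) (le_abs_self _)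
  refine ⟨?_, ?_, ?_⟩
  · intro e he
    by_cases hv : yL e.1 + yR e.2 > c e
    · have := hcover e he hv; linarith
    · have := hδL e.1; have := hδR e.2; push_neg at hv; linarith
  · have : (∑ i, |(yL i - δL i) - yL i|) = ∑ i, δL i := by
      apply Finset.sum_congr rfl; intro i _
      rw [show yL i - δL i - yL i = -(δL i) by ring, abs_neg, abs_of_nonneg (hδL i)]
    have h2 : (∑ j, |(yR j - δR j) - yR j|) = ∑ j, δR j := by
      apply Finset.sum_congr rfl; intro j _
      rw [show yR j - δR j - yR j = -(δR j) by ring, abs_neg, abs_of_nonneg (hδR j)]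
    rw [this, h2]; exact key
  · have hL : ∀ i, |(yL i - δL i) - ysL i| ≤ δL i + |yL i - ysL i| := by
      intro i
      calc |(yL i - δL i) - ysL i| = |(-(δL i)) + (yL i - ysL i)| := by ring_nf
        _ ≤ |(-(δL i))| + |yL i - ysL i| := abs_add_le _ _
        _ = δL i + |yL i - ysL i| := by rw [abs_neg, abs_of_nonneg (hδL i)]
    have hR : ∀ j, |(yR j - δR j) - ysR j| ≤ δR j + |yR j - ysR j| := by
      intro j
      calc |(yR j - δR j) - ysR j| = |(-(δR j)) + (yR j - ysR j)| := by ring_nf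
        _ ≤ |(-(δR j))| + |yR j - ysR j| := abs_add_le _ _
        _ = δR j + |yR j - ysR j| := by rw [abs_neg, abs_of_nonneg (hδR j)]
    have s1 : ∑ i, |(yL i - δL i) - ysL i| ≤ ∑ i, (δL i + |yL i - ysL i|) :=
      Finset.sum_le_sum (fun i _ => hL i)
    have s2 : ∑ j, |(yR j - δR j) - ysR j| ≤ ∑ j, (δR j + |yR j - ysR j|) :=
      Finset.sum_le_sum (fun j _ => hR j)
    rw [Finset.sum_add_distrib] at s1 s2
    linarith
end

section
/- Let x^1, …, x^k ∈ ℝ^n be a family of points that is ℓ1-pseudo-shattered, i.e. there exist real numbers r_1, …, r_k such that for every subset S ⊆ {1,…,k} there exists y ∈ ℝ^n with (‖y − x^i‖₁ ≤ r_i if and only if i ∈ S) for all i. Then 2^k ≤ (k+1)^n · Σ_{i=0}^{n} binom(k, i). -/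
open Finset

/-- Key geometric fact: the family of "patterns" `{i : f i z ≤ 0}` of `k` affine
functions on `ℝⁿ` cannot shatter a set of size more than `n`. -/
lemma affine_pattern_shatters_le {n k : ℕ} (s : Fin k → Fin n → ℝ) (c : Fin k → ℝ)
    (𝒜 : Finset (Finset (Fin k)))
    (h𝒜 : ∀ S ∈ 𝒜, ∃ z : Fin n → ℝ, ∀ i, (∑ j, s i j * z j + c i ≤ 0 ↔ i ∈ S))
    {A : Finset (Fin k)} (hA : 𝒜.Shatters A) : A.card ≤ n := by
  by_contra hcard
  push_neg at hcard
  obtain ⟨A', hA'sub, hA'card⟩ := Finset.exists_subset_card_eq hcard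
  have hA' : 𝒜.Shatters A' := hA.mono_right hA'sub
  -- the linear parts of the functions indexed by `A'` are linearly dependent
  have hnli : ¬ LinearIndependent ℝ (fun i : ↥A' => s i) := by
    intro hli
    have h1 := hli.fintype_card_le_finrank
    rw [Module.finrank_fin_fun, Fintype.card_coe, hA'card] at h1
    omega
  obtain ⟨g, hg0, i₀, hgi₀⟩ := Fintype.not_linearIndependent_iff.1 hnli
  set G : Fin k → ℝ := fun i => if h : i ∈ A' then g ⟨i, h⟩ else 0 with hG
  have hGi : ∀ i : ↥A', G ↑i = g i := by
    intro i; simp [hG, i.2]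
  have hGs : ∀ j, ∑ i ∈ A', G i * s i j = 0 := by
    intro j
    have h2 := congrFun hg0 j
    simp only [Finset.sum_apply, Pi.smul_apply, smul_eq_mul, Pi.zero_apply] at h2
    rw [← Finset.sum_attach A' (fun i => G i * s i j)]
    rw [← h2]
    rw [Finset.univ_eq_attach]
    exact Finset.sum_congr rfl fun i _ => by rw [hGi]
  -- the weighted combination of the affine functions is constant
  have hconst : ∀ z : Fin n → ℝ,
      ∑ i ∈ A', G i * (∑ j, s i j * z j + c i) = ∑ i ∈ A', G i * c i := by
    intro z
    have hz : ∑ i ∈ A', G i * (∑ j, s i j * z j) = 0 := by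
      calc ∑ i ∈ A', G i * (∑ j, s i j * z j)
          = ∑ i ∈ A', ∑ j, G i * s i j * z j := by
            refine Finset.sum_congr rfl fun i _ => ?_
            rw [Finset.mul_sum]
            exact Finset.sum_congr rfl fun j _ => by ring
        _ = ∑ j, ∑ i ∈ A', G i * s i j * z j := Finset.sum_comm
        _ = ∑ j, (∑ i ∈ A', G i * s i j) * z j := by
            refine Finset.sum_congr rfl fun j _ => ?_
            rw [Finset.sum_mul]
        _ = 0 := by simp [hGs]
    calc ∑ i ∈ A', G i * (∑ j, s i j * z j + c i)
        = ∑ i ∈ A', (G i * (∑ j, s i j * z j) + G i * c i) := by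
          refine Finset.sum_congr rfl fun i _ => ?_; ring
      _ = (∑ i ∈ A', G i * (∑ j, s i j * z j)) + ∑ i ∈ A', G i * c i :=
          Finset.sum_add_distrib
      _ = ∑ i ∈ A', G i * c i := by rw [hz, zero_add]
  -- use shattering to realize the "positive" and "negative" patterns
  obtain ⟨CP, hCP𝒜, hCPeq⟩ := hA' (Finset.filter_subset (fun i => 0 < G i) A')
  obtain ⟨CN, hCN𝒜, hCNeq⟩ := hA' (Finset.filter_subset (fun i => G i < 0) A')
  obtain ⟨zP, hzP⟩ := h𝒜 CP hCP𝒜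
  obtain ⟨zN, hzN⟩ := h𝒜 CN hCN𝒜
  have hiP : ∀ i ∈ A', (∑ j, s i j * zP j + c i ≤ 0 ↔ 0 < G i) := by
    intro i hi
    rw [hzP i]
    constructor
    · intro h
      have h2 : i ∈ A' ∩ CP := Finset.mem_inter.2 ⟨hi, h⟩
      rw [hCPeq] at h2
      exact (Finset.mem_filter.1 h2).2
    · intro h
      have h2 : i ∈ A'.filter (fun i => 0 < G i) := Finset.mem_filter.2 ⟨hi, h⟩
      rw [← hCPeq] at h2
      exact (Finset.mem_inter.1 h2).2
  have hiN : ∀ i ∈ A', (∑ j, s i j * zN j + c i ≤ 0 ↔ G i < 0) := by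
    intro i hi
    rw [hzN i]
    constructor
    · intro h
      have h2 : i ∈ A' ∩ CN := Finset.mem_inter.2 ⟨hi, h⟩
      rw [hCNeq] at h2
      exact (Finset.mem_filter.1 h2).2
    · intro h
      have h2 : i ∈ A'.filter (fun i => G i < 0) := Finset.mem_filter.2 ⟨hi, h⟩
      rw [← hCNeq] at h2
      exact (Finset.mem_inter.1 h2).2
  have hle : ∀ i ∈ A', G i * (∑ j, s i j * zP j + c i) ≤ 0 := by
    intro i hi
    rcases lt_trichotomy (G i) 0 with h | h | h
    · have hf : 0 < ∑ j, s i j * zP j + c i := by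
        by_contra hf
        push_neg at hf
        exact absurd ((hiP i hi).1 hf) (by linarith)
      exact le_of_lt (mul_neg_of_neg_of_pos h hf)
    · simp [h]
    · exact mul_nonpos_of_nonneg_of_nonpos h.le ((hiP i hi).2 h)
  have hge : ∀ i ∈ A', 0 ≤ G i * (∑ j, s i j * zN j + c i) := by
    intro i hi
    rcases lt_trichotomy (G i) 0 with h | h | h
    · nlinarith [(hiN i hi).2 h]
    · simp [h]
    · have hf : 0 < ∑ j, s i j * zN j + c i := by
        by_contra hf
        push_neg at hf
        exact absurd ((hiN i hi).1 hf) (by linarith)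
      exact le_of_lt (mul_pos h hf)
  have hPN : ∑ i ∈ A', G i * (∑ j, s i j * zP j + c i)
      = ∑ i ∈ A', G i * (∑ j, s i j * zN j + c i) := by
    rw [hconst zP, hconst zN]
  have hi₀mem : (↑i₀ : Fin k) ∈ A' := i₀.2
  have hGi₀ : G ↑i₀ ≠ 0 := by rw [hGi]; exact hgi₀
  rcases hGi₀.lt_or_gt with h | h
  · -- strict negativity at zP
    have hstrict : G ↑i₀ * (∑ j, s ↑i₀ j * zP j + c ↑i₀) < 0 := by
      have hf : 0 < ∑ j, s ↑i₀ j * zP j + c ↑i₀ := by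
        by_contra hf
        push_neg at hf
        exact absurd ((hiP _ hi₀mem).1 hf) (by linarith)
      exact mul_neg_of_neg_of_pos h hf
    have hsum : ∑ i ∈ A', G i * (∑ j, s i j * zP j + c i) < 0 := by
      have := Finset.sum_lt_sum hle ⟨↑i₀, hi₀mem, hstrict⟩
      simpa using this
    have hsum2 : 0 ≤ ∑ i ∈ A', G i * (∑ j, s i j * zN j + c i) :=
      Finset.sum_nonneg hge
    linarith [hPN]
  · -- strict positivity at zN
    have hstrict : 0 < G ↑i₀ * (∑ j, s ↑i₀ j * zN j + c ↑i₀) := by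
      have hf : 0 < ∑ j, s ↑i₀ j * zN j + c ↑i₀ := by
        by_contra hf
        push_neg at hf
        exact absurd ((hiN _ hi₀mem).1 hf) (by linarith)
      exact mul_pos h hf
    have hsum : 0 < ∑ i ∈ A', G i * (∑ j, s i j * zN j + c i) := by
      have := Finset.sum_lt_sum hge ⟨↑i₀, hi₀mem, hstrict⟩
      simpa using this
    have hsum2 : ∑ i ∈ A', G i * (∑ j, s i j * zP j + c i) ≤ 0 :=
      Finset.sum_nonpos hle
    linarith [hPN]

/-- Via Sauer–Shelah: a family of affine patterns in `ℝⁿ` has at most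
`Σ_{i ≤ n} C(k, i)` members. -/
lemma affine_pattern_card_le {n k : ℕ} (s : Fin k → Fin n → ℝ) (c : Fin k → ℝ)
    (𝒜 : Finset (Finset (Fin k)))
    (h𝒜 : ∀ S ∈ 𝒜, ∃ z : Fin n → ℝ, ∀ i, (∑ j, s i j * z j + c i ≤ 0 ↔ i ∈ S)) :
    𝒜.card ≤ ∑ i ∈ Finset.range (n + 1), k.choose i := by
  have hvc : 𝒜.vcDim ≤ n := by
    refine Finset.sup_le fun A hA => ?_
    exact affine_pattern_shatters_le s c 𝒜 h𝒜 (Finset.mem_shatterer.1 hA)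
  calc 𝒜.card ≤ 𝒜.shatterer.card := Finset.card_le_card_shatterer 𝒜
    _ ≤ ∑ i ∈ Finset.Iic 𝒜.vcDim, (Fintype.card (Fin k)).choose i :=
        Finset.card_shatterer_le_sum_vcDim
    _ ≤ ∑ i ∈ Finset.range (n + 1), k.choose i := by
        rw [Fintype.card_fin]
        apply Finset.sum_le_sum_of_subset
        intro i hi
        simp only [Finset.mem_Iic] at hi
        simp only [Finset.mem_range]
        omega

/-- If `x^1, …, x^k ∈ ℝ^n` is ℓ1-pseudo-shattered, then
`2^k ≤ (k+1)^n · Σ_{i=0}^{n} C(k, i)`. -/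
theorem l1_shattering_counting_bound
    {n k : ℕ} (x : Fin k → Fin n → ℝ)
    (hshatter : ∃ r : Fin k → ℝ, ∀ S : Finset (Fin k), ∃ y : Fin n → ℝ,
      ∀ i : Fin k, (∑ j, |y j - x i j| ≤ r i ↔ i ∈ S)) :
    2 ^ k ≤ (k + 1) ^ n * ∑ i ∈ Finset.range (n + 1), k.choose i := by
  obtain ⟨r, hr⟩ := hshatter
  choose y hy using hr
  -- signature: per coordinate, how many points lie (weakly) below the witness
  set m : Finset (Fin k) → (Fin n → Fin (k + 1)) := fun S j =>
    ⟨(univ.filter fun i => x i j ≤ y S j).card,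
      Nat.lt_succ_of_le (le_trans (Finset.card_filter_le _ _) (by simp))⟩ with hm
  have hfib : ∀ σ : Fin n → Fin (k + 1),
      (univ.filter fun S => m S = σ).card ≤ ∑ i ∈ Finset.range (n + 1), k.choose i := by
    intro σ
    rcases (univ.filter fun S => m S = σ).eq_empty_or_nonempty with hF | ⟨S₀, hS₀⟩
    · simp [hF]
    · -- within a fiber, the sign pattern relative to the points is constant
      have hfilter : ∀ S ∈ (univ.filter fun S => m S = σ), ∀ j,
          (univ.filter fun i => x i j ≤ y S j) = (univ.filter fun i => x i j ≤ y S₀ j) := by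
        intro S hS j
        have h1 : m S = σ := (Finset.mem_filter.1 hS).2
        have h2 : m S₀ = σ := (Finset.mem_filter.1 hS₀).2
        have hc : (univ.filter fun i => x i j ≤ y S j).card
            = (univ.filter fun i => x i j ≤ y S₀ j).card :=
          congrArg Fin.val (congrFun (h1.trans h2.symm) j)
        rcases le_total (y S j) (y S₀ j) with h | h
        · exact Finset.eq_of_subset_of_card_le
            (fun i hi => Finset.mem_filter.2
              ⟨Finset.mem_univ _, le_trans (Finset.mem_filter.1 hi).2 h⟩) (le_of_eq hc.symm)
        · exact (Finset.eq_of_subset_of_card_le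
            (fun i hi => Finset.mem_filter.2
              ⟨Finset.mem_univ _, le_trans (Finset.mem_filter.1 hi).2 h⟩) (le_of_eq hc)).symm
      set s : Fin k → Fin n → ℝ := fun i j => if x i j ≤ y S₀ j then 1 else -1 with hs
      set c : Fin k → ℝ := fun i => -(∑ j, s i j * x i j) - r i with hc
      refine affine_pattern_card_le s c _ ?_
      intro S hS
      refine ⟨y S, fun i => ?_⟩
      have habs : ∀ j, s i j * (y S j - x i j) = |y S j - x i j| := by
        intro j
        have hiff : x i j ≤ y S j ↔ x i j ≤ y S₀ j := by
          have h := Finset.ext_iff.1 (hfilter S hS j) i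
          simpa using h
        by_cases hx : x i j ≤ y S j
        · rw [hs]
          simp only [hiff.1 hx, if_true]
          rw [one_mul, abs_of_nonneg (sub_nonneg.2 hx)]
        · rw [hs]
          simp only [fun h => hx (hiff.2 h), if_neg (fun h => hx (hiff.2 h))]
          push_neg at hx
          rw [abs_of_neg (sub_neg.2 hx)]
          ring
      have hsum : ∑ j, s i j * y S j + c i = (∑ j, |y S j - x i j|) - r i := by
        have : ∑ j, s i j * y S j - ∑ j, s i j * x i j = ∑ j, |y S j - x i j| := by
          rw [← Finset.sum_sub_distrib]
          refine Finset.sum_congr rfl fun j _ => ?_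
          rw [← habs j]; ring
        rw [hc]
        simp only []
        linarith [this]
      rw [hsum, sub_nonpos]
      exact hy S i
  have h2k : (2 : ℕ) ^ k = (univ : Finset (Finset (Fin k))).card := by
    simp [Finset.card_univ]
  rw [h2k]
  rw [Finset.card_eq_sum_card_fiberwise (f := m) (t := univ) (fun S _ => Finset.mem_univ _)]
  calc ∑ σ : Fin n → Fin (k + 1), (univ.filter fun S => m S = σ).card
      ≤ ∑ _σ : Fin n → Fin (k + 1), ∑ i ∈ Finset.range (n + 1), k.choose i :=
        Finset.sum_le_sum fun σ _ => hfib σ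
    _ = (k + 1) ^ n * ∑ i ∈ Finset.range (n + 1), k.choose i := by
        rw [Finset.sum_const, Finset.card_univ]
        simp [mul_comm, Fintype.card_fun]
end

section
/- The pseudo-dimension of the class of ℓ1-distance functions {x ↦ ‖y − x‖₁ : y ∈ ℝ^n} on ℝ^n is O(n log n): there exists an absolute constant C > 0 such that for every n ≥ 1, any family x^1, …, x^k ∈ ℝ^n that is ℓ1-pseudo-shattered satisfies k ≤ C · n · log(n + 1). -/
open Finset

noncomputable def affPat (n k : ℕ) (a : Fin k → Fin n → ℝ) (b : Fin k → ℝ) :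
    Finset (Finset (Fin k)) :=
  @Finset.filter _
    (fun S => ∃ y : Fin n → ℝ, ∀ i, (∑ j, a i j * y j + b i ≤ 0 ↔ i ∈ S))
    (Classical.decPred _) Finset.univ

lemma mem_affPat {n k : ℕ} {a : Fin k → Fin n → ℝ} {b : Fin k → ℝ} {S : Finset (Fin k)} :
    S ∈ affPat n k a b ↔ ∃ y : Fin n → ℝ, ∀ i, (∑ j, a i j * y j + b i ≤ 0 ↔ i ∈ S) := by
  simp [affPat]


lemma aff_seg {n : ℕ} (a : Fin n → ℝ) (b : ℝ) (y y' : Fin n → ℝ) (θ : ℝ) :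
    ∑ j, a j * ((1-θ) * y j + θ * y' j) + b
      = (1-θ) * (∑ j, a j * y j + b) + θ * (∑ j, a j * y' j + b) := by
  have h : ∀ j ∈ Finset.univ, a j * ((1-θ) * y j + θ * y' j)
      = (1-θ)*(a j * y j) + θ*(a j * y' j) := by intros; ring
  rw [Finset.sum_congr rfl h, Finset.sum_add_distrib, ← Finset.mul_sum, ← Finset.mul_sum]
  ring

section Step
open scoped Classical
variable {k n : ℕ} (a : Fin (k+1) → Fin n → ℝ) (b : Fin (k+1) → ℝ)

noncomputable abbrev res : Finset (Fin (k+1)) → Finset (Fin k) :=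
  fun S => Finset.univ.filter (fun i => i.castSucc ∈ S)

lemma res_inj {S₁ S₂ : Finset (Fin (k+1))} (h : res S₁ = res S₂)
    (hl : Fin.last k ∈ S₁ ↔ Fin.last k ∈ S₂) : S₁ = S₂ := by
  ext i
  induction i using Fin.lastCases with
  | last => exact hl
  | cast i =>
      have := Finset.ext_iff.mp h i
      simpa using this

-- the restriction of a realizable pattern is realizable for the first k functions
lemma res_mem {S : Finset (Fin (k+1))} (hS : S ∈ affPat n (k+1) a b) :
    res S ∈ affPat n k (fun i => a i.castSucc) (fun i => b i.castSucc) := by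
  rw [mem_affPat] at hS ⊢
  obtain ⟨y, hy⟩ := hS
  exact ⟨y, fun i => by simpa using hy i.castSucc⟩

end Step

section Doubled
variable {k m : ℕ} (a : Fin (k+1) → Fin (m+1) → ℝ) (b : Fin (k+1) → ℝ)

/-- If a restricted pattern `T` is "doubled", we find a witness on the hyperplane
where the last function vanishes, whose other coordinates witness `T` for the
restricted family on `ℝ^m`. -/
lemma doubled_mem (j₀ : Fin (m+1)) (hj₀ : a (Fin.last k) j₀ ≠ 0)
    {S₁ S₂ : Finset (Fin (k+1))} (h₁ : S₁ ∈ affPat (m+1) (k+1) a b)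
    (h₂ : S₂ ∈ affPat (m+1) (k+1) a b) (hres : res S₁ = res S₂)
    (hL₁ : Fin.last k ∈ S₁) (hL₂ : Fin.last k ∉ S₂) :
    res S₁ ∈ affPat m k
      (fun i l => a i.castSucc (j₀.succAbove l)
        - a i.castSucc j₀ * a (Fin.last k) (j₀.succAbove l) / a (Fin.last k) j₀)
      (fun i => b i.castSucc - a i.castSucc j₀ * b (Fin.last k) / a (Fin.last k) j₀) := by
  rw [mem_affPat] at h₁ h₂
  obtain ⟨y₁, hy₁⟩ := h₁
  obtain ⟨y₂, hy₂⟩ := h₂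
  set L := Fin.last k
  set u := ∑ j, a L j * y₁ j + b L with hu_def
  set v := ∑ j, a L j * y₂ j + b L with hv_def
  have hu : u ≤ 0 := (hy₁ L).mpr hL₁
  have hv : 0 < v := lt_of_not_ge (fun h => hL₂ ((hy₂ L).mp h))
  have hvu : 0 < v - u := by linarith
  set θ : ℝ := -u / (v - u) with hθ_def
  have hθ0 : 0 ≤ θ := div_nonneg (by linarith) (le_of_lt hvu)
  have hθ1 : θ < 1 := by
    rw [hθ_def, div_lt_one hvu]; linarith
  set z : Fin (m+1) → ℝ := fun j => (1-θ) * y₁ j + θ * y₂ j with hz_def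
  have hseg : ∀ i : Fin (k+1), ∑ j, a i j * z j + b i
      = (1-θ) * (∑ j, a i j * y₁ j + b i) + θ * (∑ j, a i j * y₂ j + b i) := by
    intro i; exact aff_seg (a i) (b i) y₁ y₂ θ
  have hzL : ∑ j, a L j * z j + b L = 0 := by
    rw [hseg L, ← hu_def, ← hv_def, hθ_def]
    field_simp
    ring
  have hzi : ∀ i : Fin k, (∑ j, a i.castSucc j * z j + b i.castSucc ≤ 0 ↔ i ∈ res S₁) := by
    intro i
    have hmem : i ∈ res S₁ ↔ i.castSucc ∈ S₁ := by simp [res]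
    have hmem₂ : i ∈ res S₁ ↔ i.castSucc ∈ S₂ := by rw [hres]; simp [res]
    rw [hseg i.castSucc]
    by_cases hiT : i ∈ res S₁
    · have h1 : ∑ j, a i.castSucc j * y₁ j + b i.castSucc ≤ 0 := (hy₁ _).mpr (hmem.mp hiT)
      have h2 : ∑ j, a i.castSucc j * y₂ j + b i.castSucc ≤ 0 := (hy₂ _).mpr (hmem₂.mp hiT)
      simp only [hiT, iff_true]
      nlinarith
    · have h1 : 0 < ∑ j, a i.castSucc j * y₁ j + b i.castSucc :=
        lt_of_not_ge (fun h => hiT (hmem.mpr ((hy₁ _).mp h)))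
      have h2 : 0 < ∑ j, a i.castSucc j * y₂ j + b i.castSucc :=
        lt_of_not_ge (fun h => hiT (hmem₂.mpr ((hy₂ _).mp h)))
      simp only [hiT, iff_false, not_le]
      nlinarith
  -- now project onto the hyperplane coordinates
  rw [mem_affPat]
  clear_value z θ u v
  refine ⟨fun l => z (j₀.succAbove l), fun i => ?_⟩
  rw [← hzi i]
  have hkey : ∑ l, (a i.castSucc (j₀.succAbove l)
        - a i.castSucc j₀ * a L (j₀.succAbove l) / a L j₀) * z (j₀.succAbove l)
      + (b i.castSucc - a i.castSucc j₀ * b L / a L j₀)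
      = ∑ j, a i.castSucc j * z j + b i.castSucc := by
    have hd1 : ∑ j, a i.castSucc j * z j
        = a i.castSucc j₀ * z j₀ + ∑ l, a i.castSucc (j₀.succAbove l) * z (j₀.succAbove l) :=
      Fin.sum_univ_succAbove _ j₀
    have hd2 : ∑ j, a L j * z j
        = a L j₀ * z j₀ + ∑ l, a L (j₀.succAbove l) * z (j₀.succAbove l) :=
      Fin.sum_univ_succAbove _ j₀
    have hzL' : a L j₀ * z j₀ + (∑ l, a L (j₀.succAbove l) * z (j₀.succAbove l)) + b L = 0 := by
      rw [← hd2]; exact hzL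
    have hsplit : ∑ l, (a i.castSucc (j₀.succAbove l)
          - a i.castSucc j₀ * a L (j₀.succAbove l) / a L j₀) * z (j₀.succAbove l)
        = (∑ l, a i.castSucc (j₀.succAbove l) * z (j₀.succAbove l))
          - (a i.castSucc j₀ / a L j₀) * ∑ l, a L (j₀.succAbove l) * z (j₀.succAbove l) := by
      rw [Finset.mul_sum, ← Finset.sum_sub_distrib]
      refine Finset.sum_congr rfl (fun l _ => ?_)
      field_simp
    rw [hsplit, hd1]
    have h5 : (∑ l, a L (j₀.succAbove l) * z (j₀.succAbove l)) + b L
        = -(a L j₀ * z j₀) := by linarith [hzL']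
    field_simp
    linear_combination (-(a i.castSucc j₀)) * hzL'
  rw [hkey]
end Doubled

lemma affPat_card (k : ℕ) : ∀ (n : ℕ) (a : Fin k → Fin n → ℝ) (b : Fin k → ℝ),
    (affPat n k a b).card ≤ (k+1)^n := by
  induction k with
  | zero =>
      intro n a b
      calc (affPat n 0 a b).card ≤ (Finset.univ : Finset (Finset (Fin 0))).card :=
            Finset.card_le_univ _
        _ ≤ 1 := by simp
        _ ≤ (0+1)^n := by simp
  | succ k ih =>
      intro n a b
      classical
      set Pat := affPat n (k+1) a b with hPat
      set img := Pat.image res with himg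
      set D := img.filter (fun T => ∃ S₁ ∈ Pat, ∃ S₂ ∈ Pat,
        res S₁ = T ∧ res S₂ = T ∧ Fin.last k ∈ S₁ ∧ Fin.last k ∉ S₂) with hD
      have himg_card : img.card ≤ (k+1)^n := by
        have hsub : img ⊆ affPat n k (fun i => a i.castSucc) (fun i => b i.castSucc) := by
          intro T hT
          obtain ⟨S, hS, rfl⟩ := Finset.mem_image.mp hT
          exact res_mem a b hS
        exact le_trans (Finset.card_le_card hsub) (ih n _ _)
      have hfiber : ∀ T ∈ img,
          (Pat.filter (fun S => res S = T)).card ≤ 1 + (if T ∈ D then 1 else 0) := by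
        intro T hT
        by_cases hTD : T ∈ D
        · simp only [hTD, if_true]
          have h2 : (Pat.filter (fun S => res S = T)).card
              ≤ (Finset.univ : Finset Bool).card := by
            apply Finset.card_le_card_of_injOn (fun S => decide (Fin.last k ∈ S))
              (fun _ _ => Finset.mem_univ _)
            intro S₁ h₁ S₂ h₂ hb
            have e₁ := (Finset.mem_filter.mp (Finset.mem_coe.mp h₁)).2
            have e₂ := (Finset.mem_filter.mp (Finset.mem_coe.mp h₂)).2
            exact res_inj (e₁.trans e₂.symm) (by simpa using hb)
          simpa using h2
        · simp only [hTD, if_false]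
          apply Finset.card_le_one.mpr
          intro S₁ h₁ S₂ h₂
          have p₁ := Finset.mem_filter.mp h₁
          have p₂ := Finset.mem_filter.mp h₂
          by_cases l1 : Fin.last k ∈ S₁ <;> by_cases l2 : Fin.last k ∈ S₂
          · exact res_inj (p₁.2.trans p₂.2.symm) (iff_of_true l1 l2)
          · exact absurd (Finset.mem_filter.mpr
              ⟨hT, S₁, p₁.1, S₂, p₂.1, p₁.2, p₂.2, l1, l2⟩) hTD
          · exact absurd (Finset.mem_filter.mpr
              ⟨hT, S₂, p₂.1, S₁, p₁.1, p₂.2, p₁.2, l2, l1⟩) hTD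
          · exact res_inj (p₁.2.trans p₂.2.symm) (iff_of_false l1 l2)
      have hmain : Pat.card ≤ img.card + D.card := by
        calc Pat.card = ∑ T ∈ img, (Pat.filter (fun S => res S = T)).card :=
              Finset.card_eq_sum_card_image res Pat
          _ ≤ ∑ T ∈ img, (1 + if T ∈ D then 1 else 0) := Finset.sum_le_sum hfiber
          _ = img.card + ∑ T ∈ img, (if T ∈ D then 1 else 0) := by
              rw [Finset.sum_add_distrib, Finset.sum_const, smul_eq_mul, mul_one]
          _ = img.card + D.card := by
              rw [Finset.sum_ite_mem, Finset.inter_eq_right.mpr (Finset.filter_subset _ _),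
                Finset.sum_const, smul_eq_mul, mul_one]
      obtain _ | m := n
      ·
          have hone : Pat.card ≤ 1 := by
            apply Finset.card_le_one.mpr
            intro S₁ h₁ S₂ h₂
            obtain ⟨y₁, hy₁⟩ := mem_affPat.mp h₁
            obtain ⟨y₂, hy₂⟩ := mem_affPat.mp h₂
            have : y₁ = y₂ := Subsingleton.elim _ _
            subst this
            ext i; rw [← hy₁ i, ← hy₂ i]
          simpa using hone
      · by_cases hA : ∀ j, a (Fin.last k) j = 0
        · have hDempty : D = ∅ := by
            rw [Finset.eq_empty_iff_forall_notMem]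
            rintro T hT
            obtain ⟨-, S₁, h₁, S₂, h₂, -, -, hl₁, hl₂⟩ := Finset.mem_filter.mp hT
            obtain ⟨y₁, hy₁⟩ := mem_affPat.mp h₁
            obtain ⟨y₂, hy₂⟩ := mem_affPat.mp h₂
            have e₁ : ∑ j, a (Fin.last k) j * y₁ j + b (Fin.last k) = b (Fin.last k) := by
              simp [hA]
            have e₂ : ∑ j, a (Fin.last k) j * y₂ j + b (Fin.last k) = b (Fin.last k) := by
              simp [hA]
            have hb1 : b (Fin.last k) ≤ 0 := e₁ ▸ (hy₁ _).mpr hl₁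
            have hb2 : ¬ b (Fin.last k) ≤ 0 := fun h => hl₂ ((hy₂ _).mp (by rw [e₂]; exact h))
            exact hb2 hb1
          rw [hDempty] at hmain
          simp only [Finset.card_empty, Nat.add_zero] at hmain
          calc Pat.card ≤ (k+1)^(m+1) := le_trans hmain himg_card
            _ ≤ (k+1+1)^(m+1) := Nat.pow_le_pow_left (by omega) _
        · push_neg at hA
          obtain ⟨j₀, hj₀⟩ := hA
          have hDcard : D.card ≤ (k+1)^m := by
            have hsub : D ⊆ affPat m k
                (fun i l => a i.castSucc (j₀.succAbove l)
                  - a i.castSucc j₀ * a (Fin.last k) (j₀.succAbove l) / a (Fin.last k) j₀)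
                (fun i => b i.castSucc - a i.castSucc j₀ * b (Fin.last k) / a (Fin.last k) j₀) := by
              intro T hT
              obtain ⟨-, S₁, h₁, S₂, h₂, hr₁, hr₂, hl₁, hl₂⟩ := Finset.mem_filter.mp hT
              have := doubled_mem a b j₀ hj₀ h₁ h₂ (hr₁.trans hr₂.symm) hl₁ hl₂
              rwa [hr₁] at this
            exact le_trans (Finset.card_le_card hsub) (ih m _ _)
          calc Pat.card ≤ (k+1)^(m+1) + (k+1)^m := by
                exact le_trans hmain (Nat.add_le_add himg_card hDcard)
            _ = (k+1)^m * (k+1) + (k+1)^m := by ring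
            _ = (k+1)^m * (k+2) := by ring
            _ ≤ (k+2)^m * (k+2) := Nat.mul_le_mul_right _ (Nat.pow_le_pow_left (by omega) _)
            _ = (k+1+1)^(m+1) := by rw [pow_succ]

open scoped Classical in
lemma chain_card (k : ℕ) (xj : Fin k → ℝ) :
    (Finset.univ.filter (fun T : Finset (Fin k) => ∃ c : ℝ, ∀ i, (xj i ≤ c ↔ i ∈ T))).card
      ≤ k + 1 := by
  classical
  have h := Finset.card_le_card_of_injOn (fun T : Finset (Fin k) => T.card)
    (s := Finset.univ.filter (fun T : Finset (Fin k) => ∃ c : ℝ, ∀ i, (xj i ≤ c ↔ i ∈ T)))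
    (t := Finset.range (k+1)) ?_ ?_
  · simpa using h
  · intro T _
    simp only [Finset.mem_coe, Finset.mem_range]
    exact Nat.lt_succ_of_le (by simpa using Finset.card_le_univ T)
  · intro T₁ h₁ T₂ h₂ hcard
    obtain ⟨-, c₁, hc₁⟩ := Finset.mem_filter.mp (Finset.mem_coe.mp h₁)
    obtain ⟨-, c₂, hc₂⟩ := Finset.mem_filter.mp (Finset.mem_coe.mp h₂)
    rcases le_total c₁ c₂ with hle | hle
    · have hsub : T₁ ⊆ T₂ := fun i hi => (hc₂ i).mp (le_trans ((hc₁ i).mpr hi) hle)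
      exact Finset.eq_of_subset_of_card_le hsub (le_of_eq (hcard.symm : T₂.card = T₁.card))
    · have hsub : T₂ ⊆ T₁ := fun i hi => (hc₁ i).mp (le_trans ((hc₂ i).mpr hi) hle)
      exact (Finset.eq_of_subset_of_card_le hsub (le_of_eq (hcard : T₁.card = T₂.card))).symm

lemma main_count {n k : ℕ} (x : Fin k → Fin n → ℝ) (r : Fin k → ℝ)
    (h : ∀ S : Finset (Fin k), ∃ y : Fin n → ℝ,
      ∀ i : Fin k, (∑ j, |y j - x i j| ≤ r i ↔ i ∈ S)) :
    2^k ≤ (k+1)^(2*n) := by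
  classical
  set Chains : Fin n → Finset (Finset (Fin k)) := fun j =>
    Finset.univ.filter (fun T : Finset (Fin k) => ∃ c : ℝ, ∀ i, (x i j ≤ c ↔ i ∈ T))
    with hChains
  set Valid : Finset (Fin n → Finset (Fin k)) := Fintype.piFinset Chains with hValid
  set aOf : (Fin n → Finset (Fin k)) → Fin k → Fin n → ℝ :=
    fun t i j => if i ∈ t j then 1 else -1 with haOf
  set bOf : (Fin n → Finset (Fin k)) → Fin k → ℝ :=
    fun t i => -(∑ j, (if i ∈ t j then (1:ℝ) else -1) * x i j) - r i with hbOf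
  have key : (Finset.univ : Finset (Finset (Fin k)))
      ⊆ Valid.biUnion (fun t => affPat n k (aOf t) (bOf t)) := by
    intro S _
    obtain ⟨y, hy⟩ := h S
    set t : Fin n → Finset (Fin k) := fun j => Finset.univ.filter (fun i => x i j ≤ y j)
      with ht
    rw [Finset.mem_biUnion]
    refine ⟨t, ?_, ?_⟩
    · rw [hValid, Fintype.mem_piFinset]
      intro j
      rw [hChains, Finset.mem_filter]
      exact ⟨Finset.mem_univ _, y j, fun i => by simp [ht]⟩
    · rw [mem_affPat]
      refine ⟨y, fun i => ?_⟩
      have habs : ∀ j, (if i ∈ t j then (1:ℝ) else -1) * y j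
          - (if i ∈ t j then (1:ℝ) else -1) * x i j = |y j - x i j| := by
        intro j
        by_cases hc : x i j ≤ y j
        · have : i ∈ t j := by simp [ht, hc]
          rw [if_pos this, abs_of_nonneg (by linarith)]
          ring
        · have : i ∉ t j := by simp [ht, hc]
          rw [if_neg this, abs_of_neg (by push_neg at hc; linarith)]
          ring
      have heq : ∑ j, aOf t i j * y j + bOf t i = (∑ j, |y j - x i j|) - r i := by
        rw [haOf, hbOf]
        simp only
        rw [← Finset.sum_congr rfl (fun j _ => habs j), Finset.sum_sub_distrib]
        ring
      rw [heq, sub_nonpos]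
      exact hy i
  have hValid_card : Valid.card ≤ (k+1)^n := by
    rw [hValid, Fintype.card_piFinset]
    calc ∏ j, (Chains j).card ≤ ∏ _j : Fin n, (k+1) :=
          Finset.prod_le_prod' (fun j _ => chain_card k (fun i => x i j))
      _ = (k+1)^n := by rw [Finset.prod_const, Finset.card_univ, Fintype.card_fin]
  calc 2^k = (Finset.univ : Finset (Finset (Fin k))).card := by
        rw [Finset.card_univ, Fintype.card_finset, Fintype.card_fin]
    _ ≤ (Valid.biUnion (fun t => affPat n k (aOf t) (bOf t))).card := Finset.card_le_card key
    _ ≤ ∑ t ∈ Valid, (affPat n k (aOf t) (bOf t)).card := Finset.card_biUnion_le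
    _ ≤ ∑ _t ∈ Valid, (k+1)^n := Finset.sum_le_sum (fun t _ => affPat_card k n _ _)
    _ = Valid.card * (k+1)^n := by rw [Finset.sum_const, smul_eq_mul]
    _ ≤ (k+1)^n * (k+1)^n := Nat.mul_le_mul_right _ hValid_card
    _ = (k+1)^(2*n) := by rw [← pow_add]; ring_nf

lemma final_analysis (n k : ℕ) (hn : 1 ≤ n) (hcount : 2^k ≤ (k+1)^(2*n)) :
    (k : ℝ) ≤ 100 * n * Real.log (n+1) := by
  have hlogn : (0:ℝ) < Real.log (n+1) := by
    apply Real.log_pos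
    have : (1:ℝ) ≤ (n:ℝ) := by exact_mod_cast hn
    linarith
  have hnR : (1:ℝ) ≤ (n:ℝ) := by exact_mod_cast hn
  rcases Nat.eq_zero_or_pos k with rfl | hk
  · simp only [Nat.cast_zero]
    positivity
  have hkR : (1:ℝ) ≤ (k:ℝ) := by exact_mod_cast hk
  have hlog2 : (2:ℝ)/3 < Real.log 2 := by
    have := Real.log_two_gt_d9
    linarith
  -- take logs of the counting inequality
  have hcast : (2:ℝ)^k ≤ ((k:ℝ)+1)^(2*n) := by
    have := (Nat.cast_le (α := ℝ)).mpr hcount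
    push_cast at this
    convert this using 2
  have h1 : (k:ℝ) * Real.log 2 ≤ (2*n : ℝ) * Real.log ((k:ℝ)+1) := by
    have hpos : (0:ℝ) < 2^k := by positivity
    have := Real.log_le_log hpos hcast
    rw [Real.log_pow, Real.log_pow] at this
    push_cast at this
    linarith
  -- log (k+1) ≤ 4 √k
  have hsqrt_nonneg : (0:ℝ) ≤ Real.sqrt k := Real.sqrt_nonneg _
  have hsk : (1:ℝ) ≤ Real.sqrt k := by
    rw [show (1:ℝ) = Real.sqrt 1 from (Real.sqrt_one).symm]
    exact Real.sqrt_le_sqrt hkR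
  have hsq : Real.sqrt k * Real.sqrt k = (k:ℝ) := Real.mul_self_sqrt (by positivity)
  have h2 : Real.log ((k:ℝ)+1) ≤ 4 * Real.sqrt k := by
    have e1 : Real.log ((k:ℝ)+1) = 2 * Real.log (Real.sqrt ((k:ℝ)+1)) := by
      rw [Real.log_sqrt (by positivity)]; ring
    have e2 : Real.log (Real.sqrt ((k:ℝ)+1)) ≤ Real.sqrt ((k:ℝ)+1) :=
      le_trans (Real.log_le_sub_one_of_pos (Real.sqrt_pos.mpr (by positivity))) (by linarith)
    have e3 : Real.sqrt ((k:ℝ)+1) ≤ Real.sqrt k + 1 := by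
      have h4 : ((k:ℝ)+1) ≤ (Real.sqrt k + 1)^2 := by nlinarith
      have := Real.sqrt_le_sqrt h4
      rwa [Real.sqrt_sq (by positivity)] at this
    calc Real.log ((k:ℝ)+1) = 2 * Real.log (Real.sqrt ((k:ℝ)+1)) := e1
      _ ≤ 2 * (Real.sqrt k + 1) := by linarith
      _ ≤ 4 * Real.sqrt k := by linarith
  -- hence k ≤ 144 n²
  have h3 : Real.sqrt k ≤ 12 * (n:ℝ) := by
    have : Real.sqrt k * Real.sqrt k * Real.log 2 ≤ (2*n:ℝ) * (4 * Real.sqrt k) := by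
      rw [hsq]
      calc (k:ℝ) * Real.log 2 ≤ (2*n : ℝ) * Real.log ((k:ℝ)+1) := h1
        _ ≤ (2*n:ℝ) * (4 * Real.sqrt k) := by
            apply mul_le_mul_of_nonneg_left h2 (by positivity)
    nlinarith
  have h4 : (k:ℝ) ≤ 144 * (n:ℝ)^2 := by nlinarith
  -- log (k+1) ≤ 10 log (n+1)
  have h5 : Real.log ((k:ℝ)+1) ≤ 10 * Real.log ((n:ℝ)+1) := by
    have ha : (k:ℝ)+1 ≤ 145 * (n:ℝ)^2 := by nlinarith
    have hb : Real.log ((k:ℝ)+1) ≤ Real.log (145 * (n:ℝ)^2) :=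
      Real.log_le_log (by positivity) ha
    have hc : Real.log (145 * (n:ℝ)^2) = Real.log 145 + 2 * Real.log (n:ℝ) := by
      rw [Real.log_mul (by norm_num) (by positivity), Real.log_pow]
      push_cast; ring
    have hd : Real.log 145 ≤ 8 * Real.log 2 := by
      have : Real.log 145 ≤ Real.log (2^8) := Real.log_le_log (by norm_num) (by norm_num)
      rwa [Real.log_pow, Nat.cast_ofNat] at this
    have he : Real.log 2 ≤ Real.log ((n:ℝ)+1) := Real.log_le_log (by norm_num) (by linarith)
    have hf : Real.log (n:ℝ) ≤ Real.log ((n:ℝ)+1) := Real.log_le_log (by linarith) (by linarith)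
    calc Real.log ((k:ℝ)+1) ≤ Real.log 145 + 2 * Real.log (n:ℝ) := by rw [← hc]; exact hb
      _ ≤ 8 * Real.log ((n:ℝ)+1) + 2 * Real.log ((n:ℝ)+1) := by linarith
      _ = 10 * Real.log ((n:ℝ)+1) := by ring
  -- conclude
  have h6 : (k:ℝ) * Real.log 2 ≤ 20 * (n:ℝ) * Real.log ((n:ℝ)+1) := by
    calc (k:ℝ) * Real.log 2 ≤ (2*n : ℝ) * Real.log ((k:ℝ)+1) := h1
      _ ≤ (2*n:ℝ) * (10 * Real.log ((n:ℝ)+1)) := by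
          apply mul_le_mul_of_nonneg_left h5 (by positivity)
      _ = 20 * (n:ℝ) * Real.log ((n:ℝ)+1) := by ring
  have h7 : (k:ℝ) * (2/3) ≤ (k:ℝ) * Real.log 2 :=
    mul_le_mul_of_nonneg_left (le_of_lt hlog2) (by positivity)
  have h8 : (0:ℝ) ≤ (n:ℝ) * Real.log ((n:ℝ)+1) := by positivity
  nlinarith [h6, h7, h8]

/-- The pseudo-dimension of the class of ℓ1-distance functions
`{x ↦ ‖y − x‖₁ : y ∈ ℝ^n}` is `O(n log n)`: there is an absolute constant
`C > 0` such that any ℓ1-pseudo-shattered family in `ℝ^n` (for `n ≥ 1`)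
has size at most `C · n · log(n + 1)`. -/
theorem l1_pseudodimension_O_n_log_n :
    ∃ C : ℝ, 0 < C ∧ ∀ n : ℕ, 1 ≤ n → ∀ k : ℕ, ∀ x : Fin k → Fin n → ℝ,
      (∃ r : Fin k → ℝ, ∀ S : Finset (Fin k), ∃ y : Fin n → ℝ,
        ∀ i : Fin k, (∑ j, |y j - x i j| ≤ r i ↔ i ∈ S)) →
      (k : ℝ) ≤ C * n * Real.log (n + 1) := by
  refine ⟨100, by norm_num, fun n hn k x ⟨r, hr⟩ => ?_⟩
  exact final_analysis n k hn (main_count x r hr)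
end

section
/- Let b ∈ ℝ^n with b_j > 0 for all j and let φ : ℝ^n → ℝ^n be given by φ(y)_j = b_j y_j. A family x^1, …, x^k ∈ ℝ^n is pseudo-shattered by weighted-ℓ1 balls (with norm ‖·‖_{b,1}) if and only if the family φ(x^1), …, φ(x^k) is ℓ1-pseudo-shattered (with the same witness radii r_1, …, r_k). Consequently, any family x^1, …, x^k ∈ ℝ^n pseudo-shattered by weighted-ℓ1 balls satisfies 2^k ≤ (k+1)^n · Σ_{i=0}^{n} binom(k, i). -/
open Finset

/-- k affine functions on ℝ^n cannot achieve all sign patterns on a set T with |T| > n. -/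
lemma affine_vc {n k : ℕ} (a : Fin k → Fin n → ℝ) (c : Fin k → ℝ)
    {T : Finset (Fin k)}
    (hT : ∀ S ⊆ T, ∃ y : Fin n → ℝ, ∀ i ∈ T, ((∑ j, a i j * y j) ≤ c i ↔ i ∈ S)) :
    T.card ≤ n := by
  by_contra hcard
  push_neg at hcard
  -- the vectors (a i)_{i ∈ T} are linearly dependent
  have hnli : ¬ LinearIndependent ℝ (fun i : T => a i) := by
    intro hli
    have := hli.fintype_card_le_finrank
    rw [Module.finrank_fin_fun, Fintype.card_coe] at this
    omega
  obtain ⟨g, hg0, i₀, hgi₀⟩ := Fintype.not_linearIndependent_iff.1 hnli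
  -- extend g to all of Fin k
  classical
  set g' : Fin k → ℝ := fun i => if h : i ∈ T then g ⟨i, h⟩ else 0 with hg'
  have hg'sum : ∀ j, ∑ i ∈ T, g' i * a i j = 0 := by
    intro j
    have := congrFun hg0 j
    simp only [Finset.sum_apply, Pi.smul_apply, smul_eq_mul, Pi.zero_apply] at this
    rw [← Finset.sum_attach T (fun i => g' i * a i j)]
    rw [← this]
    refine Finset.sum_congr rfl fun i _ => ?_
    simp [g', i.2]
  have hg'i₀ : g' (i₀ : Fin k) ≠ 0 := by simp [g', i₀.2, hgi₀]
  have hi₀T : (i₀ : Fin k) ∈ T := i₀.2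
  -- the constant value
  set C : ℝ := ∑ i ∈ T, g' i * (c i) with hC
  have key : ∀ y : Fin n → ℝ, ∑ i ∈ T, g' i * ((∑ j, a i j * y j) - c i) = -C := by
    intro y
    have : ∑ i ∈ T, g' i * (∑ j, a i j * y j) = 0 := by
      have : ∑ i ∈ T, g' i * (∑ j, a i j * y j)
          = ∑ j, (∑ i ∈ T, g' i * a i j) * y j := by
        simp_rw [Finset.mul_sum, Finset.sum_mul, mul_assoc]
        rw [Finset.sum_comm]
      rw [this]
      simp [hg'sum]
    simp [mul_sub, Finset.sum_sub_distrib, this, hC]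
  -- witnesses
  obtain ⟨y₁, hy₁⟩ := hT (T.filter fun i => 0 < g' i) (filter_subset _ _)
  obtain ⟨y₂, hy₂⟩ := hT (T.filter fun i => ¬ 0 < g' i) (filter_subset _ _)
  -- terms for y₁ are ≤ 0
  have h₁ : ∀ i ∈ T, g' i * ((∑ j, a i j * y₁ j) - c i) ≤ 0 := by
    intro i hi
    rcases lt_or_ge 0 (g' i) with hpos | hnonpos
    · have : (∑ j, a i j * y₁ j) ≤ c i := (hy₁ i hi).2 (by simp [mem_filter, hi, hpos])
      exact mul_nonpos_of_nonneg_of_nonpos hpos.le (by linarith)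
    · have : ¬ (∑ j, a i j * y₁ j) ≤ c i := by
        intro h
        have := (hy₁ i hi).1 h
        simp [mem_filter, hi] at this
        linarith
      exact mul_nonpos_of_nonpos_of_nonneg hnonpos (by linarith [lt_of_not_ge this])
  have h₂ : ∀ i ∈ T, 0 ≤ g' i * ((∑ j, a i j * y₂ j) - c i) := by
    intro i hi
    rcases lt_or_ge 0 (g' i) with hpos | hnonpos
    · have : ¬ (∑ j, a i j * y₂ j) ≤ c i := by
        intro h
        have := (hy₂ i hi).1 h
        simp [mem_filter, hi] at this
        linarith
      exact mul_nonneg hpos.le (by linarith [lt_of_not_ge this])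
    · have : (∑ j, a i j * y₂ j) ≤ c i :=
        (hy₂ i hi).2 (by simp [mem_filter, hi]; linarith)
      nlinarith
  have hle : -C ≤ 0 := (key y₁) ▸ Finset.sum_nonpos h₁
  have hge : 0 ≤ -C := (key y₂) ▸ Finset.sum_nonneg h₂
  -- strictness at i₀
  rcases hg'i₀.lt_or_gt with hneg | hpos
  · -- g' i₀ < 0 : term at i₀ in y₁ sum is strictly negative
    have hf : ¬ (∑ j, a i₀.1 j * y₁ j) ≤ c i₀.1 := by
      intro h
      have := (hy₁ i₀.1 hi₀T).1 h
      simp [mem_filter, hi₀T] at this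
      linarith
    have hterm : g' i₀.1 * ((∑ j, a i₀.1 j * y₁ j) - c i₀.1) < 0 :=
      mul_neg_of_neg_of_pos hneg (by linarith [lt_of_not_ge hf])
    have : ∑ i ∈ T, g' i * ((∑ j, a i j * y₁ j) - c i) < ∑ i ∈ T, (0:ℝ) :=
      Finset.sum_lt_sum h₁ ⟨i₀.1, hi₀T, by simpa using hterm⟩
    rw [key y₁, Finset.sum_const, smul_zero] at this
    linarith
  · -- g' i₀ > 0 : term at i₀ in y₂ sum is strictly positive
    have hf : ¬ (∑ j, a i₀.1 j * y₂ j) ≤ c i₀.1 := by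
      intro h
      have := (hy₂ i₀.1 hi₀T).1 h
      simp [mem_filter, hi₀T] at this
      linarith
    have hterm : 0 < g' i₀.1 * ((∑ j, a i₀.1 j * y₂ j) - c i₀.1) :=
      mul_pos hpos (by linarith [lt_of_not_ge hf])
    have : ∑ i ∈ T, (0:ℝ) < ∑ i ∈ T, g' i * ((∑ j, a i j * y₂ j) - c i) :=
      Finset.sum_lt_sum h₂ ⟨i₀.1, hi₀T, by simpa using hterm⟩
    rw [key y₂, Finset.sum_const, smul_zero] at this
    linarith

/-- Any family of subsets of `Fin k` realizable as sign patterns of `k` affine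
functions on `ℝ^n` has at most `∑_{i≤n} C(k,i)` members (Sauer–Shelah). -/
lemma affine_pattern_card {n k : ℕ} (a : Fin k → Fin n → ℝ) (c : Fin k → ℝ)
    (𝒜 : Finset (Finset (Fin k)))
    (h𝒜 : ∀ S ∈ 𝒜, ∃ y : Fin n → ℝ, ∀ i, ((∑ j, a i j * y j) ≤ c i ↔ i ∈ S)) :
    𝒜.card ≤ ∑ i ∈ Finset.range (n + 1), k.choose i := by
  classical
  have hdim : 𝒜.vcDim ≤ n := by
    refine Finset.sup_le fun T hT => ?_
    have hsh : 𝒜.Shatters T := Finset.mem_shatterer.1 hT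
    refine affine_vc a c (T := T) fun S hS => ?_
    obtain ⟨u, hu𝒜, hu⟩ := hsh hS
    obtain ⟨y, hy⟩ := h𝒜 u hu𝒜
    exact ⟨y, fun i hi => by
      rw [hy i]
      constructor
      · intro hiu; have : i ∈ T ∩ u := Finset.mem_inter.2 ⟨hi, hiu⟩; rwa [hu] at this
      · intro hiS; have : i ∈ T ∩ u := hu ▸ hiS; exact (Finset.mem_inter.1 this).2⟩
  calc 𝒜.card ≤ 𝒜.shatterer.card := Finset.card_le_card_shatterer 𝒜
    _ ≤ ∑ i ∈ Finset.Iic 𝒜.vcDim, (Fintype.card (Fin k)).choose i :=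
        Finset.card_shatterer_le_sum_vcDim
    _ ≤ ∑ i ∈ Finset.Iic n, (Fintype.card (Fin k)).choose i := by
        refine Finset.sum_le_sum_of_subset ?_
        intro i hi
        simp only [Finset.mem_Iic] at *
        omega
    _ = ∑ i ∈ Finset.range (n + 1), k.choose i := by
        congr 1
        · ext i; simp [Nat.lt_succ_iff]
        · simp

/-- A family is pseudo-shattered by weighted-ℓ1 balls (with witness radii `r`)
iff its image under the scaling `φ(y)_j = b_j y_j` is ℓ1-pseudo-shattered with
the same radii; consequently any family pseudo-shattered by weighted-ℓ1 balls
satisfies the counting bound `2^k ≤ (k+1)^n · Σ_{i=0}^{n} C(k, i)`. -/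
theorem weighted_l1_shattering_bound
    {n k : ℕ} (b : Fin n → ℝ) (hb : ∀ j, 0 < b j) (x : Fin k → Fin n → ℝ) :
    (∀ r : Fin k → ℝ,
      ((∀ S : Finset (Fin k), ∃ y : Fin n → ℝ,
          ∀ i : Fin k, (∑ j, b j * |y j - x i j| ≤ r i ↔ i ∈ S)) ↔
       (∀ S : Finset (Fin k), ∃ y' : Fin n → ℝ,
          ∀ i : Fin k, (∑ j, |y' j - b j * x i j| ≤ r i ↔ i ∈ S)))) ∧
    ((∃ r : Fin k → ℝ, ∀ S : Finset (Fin k), ∃ y : Fin n → ℝ,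
        ∀ i : Fin k, (∑ j, b j * |y j - x i j| ≤ r i ↔ i ∈ S)) →
      2 ^ k ≤ (k + 1) ^ n * ∑ i ∈ Finset.range (n + 1), k.choose i) := by
  classical
  constructor
  · -- the equivalence under scaling
    intro r
    constructor
    · intro h S
      obtain ⟨y, hy⟩ := h S
      refine ⟨fun j => b j * y j, fun i => ?_⟩
      have : ∀ j, |b j * y j - b j * x i j| = b j * |y j - x i j| := fun j => by
        rw [← mul_sub, abs_mul, abs_of_pos (hb j)]
      simp only [this]
      exact hy i
    · intro h S
      obtain ⟨y', hy'⟩ := h S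
      refine ⟨fun j => y' j / b j, fun i => ?_⟩
      have : ∀ j, b j * |y' j / b j - x i j| = |y' j - b j * x i j| := fun j => by
        have h1 : b j * |y' j / b j - x i j| = |b j| * |y' j / b j - x i j| := by
          rw [abs_of_pos (hb j)]
        rw [h1, ← abs_mul, mul_sub, mul_div_cancel₀ _ (hb j).ne']
      simp only [this]
      exact hy' i
  · -- the counting bound
    rintro ⟨r, hr⟩
    choose ySel hySel using hr
    -- cell map: count, in each coordinate, how many sample values lie below y
    set cnt : (Fin n → ℝ) → (Fin n → Fin (k + 1)) := fun y j =>
      ⟨(univ.filter fun i : Fin k => x i j ≤ y j).card,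
        Nat.lt_succ_of_le ((card_filter_le _ _).trans (by simp))⟩ with hcnt_def
    have hcnt : ∀ y y', cnt y = cnt y' → ∀ (i : Fin k) (j : Fin n),
        (x i j ≤ y j ↔ x i j ≤ y' j) := by
      intro y y' hyy' i j
      have hcard : (univ.filter fun i : Fin k => x i j ≤ y j).card
          = (univ.filter fun i : Fin k => x i j ≤ y' j).card := by
        have := congrFun hyy' j
        simpa [hcnt_def, Fin.ext_iff] using this
      rcases le_total (y j) (y' j) with hle | hle
      · have hsub : (univ.filter fun i : Fin k => x i j ≤ y j)
            ⊆ (univ.filter fun i : Fin k => x i j ≤ y' j) := by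
          intro i' hi'
          simp only [Finset.mem_filter, Finset.mem_univ, true_and] at hi' ⊢
          exact le_trans hi' hle
        have heq := Finset.eq_of_subset_of_card_le hsub hcard.ge
        constructor
        · intro h
          have : i ∈ (univ.filter fun i : Fin k => x i j ≤ y j) := by simp [h]
          rw [heq] at this; simpa using this
        · intro h
          have : i ∈ (univ.filter fun i : Fin k => x i j ≤ y' j) := by simp [h]
          rw [← heq] at this; simpa using this
      · have hsub : (univ.filter fun i : Fin k => x i j ≤ y' j)
            ⊆ (univ.filter fun i : Fin k => x i j ≤ y j) := by
          intro i' hi'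
          simp only [Finset.mem_filter, Finset.mem_univ, true_and] at hi' ⊢
          exact le_trans hi' hle
        have heq := Finset.eq_of_subset_of_card_le hsub hcard.le
        constructor
        · intro h
          have : i ∈ (univ.filter fun i : Fin k => x i j ≤ y j) := by simp [h]
          rw [← heq] at this; simpa using this
        · intro h
          have : i ∈ (univ.filter fun i : Fin k => x i j ≤ y' j) := by simp [h]
          rw [heq] at this; simpa using this
    set f : Finset (Fin k) → (Fin n → Fin (k + 1)) := fun S => cnt (ySel S) with hf_def
    -- fiber bound
    have hfiber : ∀ cv ∈ (univ : Finset (Finset (Fin k))).image f,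
        ((univ : Finset (Finset (Fin k))).filter fun S => f S = cv).card
          ≤ ∑ i ∈ Finset.range (n + 1), k.choose i := by
      intro cv hcv
      obtain ⟨S₀, _, hS₀⟩ := Finset.mem_image.1 hcv
      set y₀ := ySel S₀ with hy₀
      set A : Fin k → Fin n → ℝ := fun i j => if x i j ≤ y₀ j then b j else -b j with hA
      set Cc : Fin k → ℝ := fun i => r i + ∑ j, A i j * x i j with hCc
      refine affine_pattern_card A Cc _ fun S hS => ?_
      rw [Finset.mem_filter] at hS
      refine ⟨ySel S, fun i => ?_⟩
      have hsame := hcnt (ySel S) y₀ (hS.2.trans hS₀.symm)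
      have hterm : ∀ j, A i j * (ySel S) j - A i j * x i j = b j * |ySel S j - x i j| := by
        intro j
        by_cases hc : x i j ≤ y₀ j
        · have h1 : x i j ≤ ySel S j := (hsame i j).2 hc
          rw [hA]; simp only [if_pos hc]
          rw [abs_of_nonneg (by linarith)]; ring
        · have h1 : ¬ x i j ≤ ySel S j := fun h => hc ((hsame i j).1 h)
          rw [hA]; simp only [if_neg hc]
          rw [abs_of_neg (by push_neg at h1; linarith)]; ring
      have hsum : ∑ j, b j * |ySel S j - x i j|
          = (∑ j, A i j * (ySel S) j) - ∑ j, A i j * x i j := by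
        rw [← Finset.sum_sub_distrib]
        exact (Finset.sum_congr rfl fun j _ => (hterm j).symm)
      have hCi : Cc i = r i + ∑ j, A i j * x i j := rfl
      rw [hCi]
      constructor
      · intro h
        exact (hySel S i).1 (by rw [hsum]; linarith)
      · intro h
        have := (hySel S i).2 h
        rw [hsum] at this
        linarith
    -- put everything together
    have h2k : (2 : ℕ) ^ k = (univ : Finset (Finset (Fin k))).card := by
      simp [Finset.card_univ]
    rw [h2k, Finset.card_eq_sum_card_image f]
    calc ∑ cv ∈ (univ : Finset (Finset (Fin k))).image f,
          ((univ : Finset (Finset (Fin k))).filter fun S => f S = cv).card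
        ≤ ∑ _cv ∈ (univ : Finset (Finset (Fin k))).image f,
            ∑ i ∈ Finset.range (n + 1), k.choose i := Finset.sum_le_sum hfiber
      _ = ((univ : Finset (Finset (Fin k))).image f).card
            * ∑ i ∈ Finset.range (n + 1), k.choose i := by
          rw [Finset.sum_const, smul_eq_mul]
      _ ≤ (k + 1) ^ n * ∑ i ∈ Finset.range (n + 1), k.choose i := by
          refine Nat.mul_le_mul_right _ ?_
          calc ((univ : Finset (Finset (Fin k))).image f).card
              ≤ Fintype.card (Fin n → Fin (k + 1)) := Finset.card_le_univ _
            _ = (k + 1) ^ n := by simp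
end

section
/- Define the rounding function ρ : ℝ → ℝ by ρ(t) = ⌊2t⌋ if t ≥ 1/2 and ρ(t) = 0 if 0 ≤ t < 1/2. Let δ_i, δ_j ≥ 0 be reals and let r be an integer with δ_i + δ_j ≥ r. Then ρ(δ_i) + ρ(δ_j) ≥ r. Moreover ρ(t) ≤ 2t for all t ≥ 0, so this integral rounding at most doubles any nonnegatively weighted sum: for any weights w_i ≥ 0, Σ_i w_i ρ(δ_i) ≤ 2 Σ_i w_i δ_i. -/
/-- The rounding `ρ(t) = ⌊2t⌋` for `t ≥ 1/2` and `ρ(t) = 0` for `0 ≤ t < 1/2`. -/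
noncomputable def roundCover (t : ℝ) : ℝ := if 1 / 2 ≤ t then (⌊2 * t⌋ : ℝ) else 0

lemma roundCover_nonneg {t : ℝ} (ht : 0 ≤ t) : 0 ≤ roundCover t := by
  unfold roundCover
  split_ifs with h
  · have : (1 : ℤ) ≤ ⌊2 * t⌋ := by
      rw [Int.le_floor]; push_cast; linarith
    exact_mod_cast le_trans zero_le_one (by exact_mod_cast this)
  · exact le_refl 0

lemma roundCover_le {t : ℝ} (ht : 0 ≤ t) : roundCover t ≤ 2 * t := by
  unfold roundCover
  split_ifs with h
  · exact Int.floor_le _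
  · linarith

lemma roundCover_ge_one {t : ℝ} (ht : 1 / 2 ≤ t) : 1 ≤ roundCover t := by
  unfold roundCover
  rw [if_pos ht]
  have : (1 : ℤ) ≤ ⌊2 * t⌋ := by rw [Int.le_floor]; push_cast; linarith
  exact_mod_cast this

/-- The rounding `ρ` preserves covering constraints with integer right-hand
sides and at most doubles any nonnegatively weighted sum. -/
theorem roundCover_properties
    {ι : Type*} [Fintype ι]
    (δi δj : ℝ) (hδi : 0 ≤ δi) (hδj : 0 ≤ δj)
    (r : ℤ) (hcov : (r : ℝ) ≤ δi + δj) :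
    ((r : ℝ) ≤ roundCover δi + roundCover δj) ∧
    (∀ t : ℝ, 0 ≤ t → roundCover t ≤ 2 * t) ∧
    (∀ w δ : ι → ℝ, (∀ i, 0 ≤ w i) → (∀ i, 0 ≤ δ i) →
      ∑ i, w i * roundCover (δ i) ≤ 2 * ∑ i, w i * δ i) := by
  refine ⟨?_, fun t ht => roundCover_le ht, ?_⟩
  · rcases le_or_gt r 0 with hr | hr
    · have := roundCover_nonneg hδi
      have := roundCover_nonneg hδj
      have : (r : ℝ) ≤ 0 := by exact_mod_cast hr
      linarith
    · -- r ≥ 1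
      have hr1 : (1 : ℤ) ≤ r := hr
      rcases le_or_gt (1/2 : ℝ) δi with hi | hi
      · rcases le_or_gt (1/2 : ℝ) δj with hj | hj
        · -- both ≥ 1/2
          unfold roundCover
          rw [if_pos hi, if_pos hj]
          have h1 : (2 * r - 1 : ℤ) ≤ ⌊2 * δi⌋ + ⌊2 * δj⌋ := by
            have hi' : (2 * δi - 1 : ℝ) < ⌊2 * δi⌋ := by
              have := Int.sub_one_lt_floor (2 * δi); linarith
            have hj' : (2 * δj - 1 : ℝ) < ⌊2 * δj⌋ := by
              have := Int.sub_one_lt_floor (2 * δj); linarith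
            have : ((2 * r - 2 : ℤ) : ℝ) < ((⌊2 * δi⌋ + ⌊2 * δj⌋ : ℤ) : ℝ) := by
              push_cast; linarith
            have := Int.lt_iff_add_one_le.mp (by exact_mod_cast this)
            omega
          have : (r : ℤ) ≤ ⌊2 * δi⌋ + ⌊2 * δj⌋ := by omega
          exact_mod_cast this
        · -- δj < 1/2, so ρ δj = 0, need ⌊2δi⌋ ≥ r
          have hji : roundCover δj = 0 := by unfold roundCover; rw [if_neg (not_le.mpr hj)]
          have hi0 : roundCover δi = (⌊2 * δi⌋ : ℝ) := by unfold roundCover; rw [if_pos hi]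
          have : (2 * r - 1 : ℝ) < 2 * δi := by push_cast; linarith
          have hfl : (2 * r - 1 : ℤ) ≤ ⌊2 * δi⌋ := by
            rw [Int.le_floor]; push_cast; push_cast at this; linarith [Int.sub_one_lt_floor (2*δi)]
          have : (r : ℤ) ≤ ⌊2 * δi⌋ := by omega
          rw [hji, hi0]
          have : (r : ℝ) ≤ (⌊2 * δi⌋ : ℝ) := by exact_mod_cast this
          linarith
      · rcases le_or_gt (1/2 : ℝ) δj with hj | hj
        · have hii : roundCover δi = 0 := by unfold roundCover; rw [if_neg (not_le.mpr hi)]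
          have hj0 : roundCover δj = (⌊2 * δj⌋ : ℝ) := by unfold roundCover; rw [if_pos hj]
          have : (2 * r - 1 : ℝ) < 2 * δj := by push_cast; linarith
          have hfl : (2 * r - 1 : ℤ) ≤ ⌊2 * δj⌋ := by
            rw [Int.le_floor]; push_cast; push_cast at this; linarith [Int.sub_one_lt_floor (2*δj)]
          have : (r : ℤ) ≤ ⌊2 * δj⌋ := by omega
          rw [hii, hj0]
          have : (r : ℝ) ≤ (⌊2 * δj⌋ : ℝ) := by exact_mod_cast this
          linarith
        · -- both < 1/2 : δi + δj < 1 but r ≥ 1, contradiction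
          exfalso
          have : (r : ℝ) ≥ 1 := by exact_mod_cast hr1
          linarith
  · intro w δ hw hδ
    rw [Finset.mul_sum]
    apply Finset.sum_le_sum
    intro i _
    calc w i * roundCover (δ i) ≤ w i * (2 * δ i) :=
          mul_le_mul_of_nonneg_left (roundCover_le (hδ i)) (hw i)
      _ = 2 * (w i * δ i) := by ring
end

section
/- Let (L, R, E) be a finite bipartite graph and let b assign a natural number b_v to every vertex v ∈ L ∪ R. If there is no function x : E → ℕ with Σ_{e ∈ N(i)} x(e) = b_i for every i ∈ L and Σ_{e ∈ N(j)} x(e) ≤ b_j for every j ∈ R (i.e. no integral b-matching saturating the demands on L while respecting the capacities on R), then there exists a set S ⊆ L with Σ_{i ∈ S} b_i > Σ_{j ∈ Γ(S)} b_j, where Γ(S) = {j ∈ R : ∃ i ∈ S, (i,j) ∈ E}. -/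
open Finset

/-- Generalized Hall condition for `b`-matchings: if there is no integral
`b`-matching saturating the demands on `L` while respecting the capacities on
`R`, then some `S ⊆ L` has `Σ_{i∈S} b_i > Σ_{j∈Γ(S)} b_j`. -/
theorem b_matching_hall_violator
    {L R : Type*} [Fintype L] [Fintype R] [DecidableEq L] [DecidableEq R]
    (E : Finset (L × R)) (bL : L → ℕ) (bR : R → ℕ)
    (h : ¬ ∃ x : L × R → ℕ,
      (∀ e, e ∉ E → x e = 0) ∧
      (∀ i : L, ∑ j, x (i, j) = bL i) ∧
      (∀ j : R, ∑ i, x (i, j) ≤ bR j)) :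
    ∃ S : Finset L,
      ∑ j ∈ Finset.univ.filter (fun j : R => ∃ i ∈ S, (i, j) ∈ E), bR j <
        ∑ i ∈ S, bL i := by
  classical
  by_contra hS
  push_neg at hS
  apply h
  -- split vertices into copies
  let t : (Σ i : L, Fin (bL i)) → Finset (Σ j : R, Fin (bR j)) :=
    fun p => Finset.univ.filter (fun q => (p.1, q.1) ∈ E)
  have hall : ∀ s : Finset (Σ i : L, Fin (bL i)), s.card ≤ (s.biUnion t).card := by
    intro s
    set S : Finset L := s.image Sigma.fst with hSdef
    have h1 : s.card ≤ ∑ i ∈ S, bL i := by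
      have hsub : s ⊆ S.sigma (fun i => (Finset.univ : Finset (Fin (bL i)))) := by
        intro p hp
        simp only [Finset.mem_sigma, Finset.mem_univ, and_true]
        exact Finset.mem_image_of_mem _ hp
      calc s.card ≤ (S.sigma (fun i => (Finset.univ : Finset (Fin (bL i))))).card :=
            Finset.card_le_card hsub
        _ = ∑ i ∈ S, bL i := by
            rw [Finset.card_sigma]; simp
    have h2 : s.biUnion t =
        (Finset.univ.filter (fun j : R => ∃ i ∈ S, (i, j) ∈ E)).sigma
          (fun j => (Finset.univ : Finset (Fin (bR j)))) := by
      ext q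
      simp only [Finset.mem_biUnion, Finset.mem_sigma, Finset.mem_filter,
        Finset.mem_univ, true_and, and_true, t, hSdef, Finset.mem_image]
      constructor
      · rintro ⟨p, hp, hE⟩
        exact ⟨p.1, ⟨p, hp, rfl⟩, hE⟩
      · rintro ⟨i, ⟨p, hp, rfl⟩, hE⟩
        exact ⟨p, hp, hE⟩
    have h3 : (s.biUnion t).card = ∑ j ∈ Finset.univ.filter (fun j : R => ∃ i ∈ S, (i, j) ∈ E), bR j := by
      rw [h2, Finset.card_sigma]; simp
    rw [h3]
    exact le_trans h1 (hS S)
  obtain ⟨f, hfinj, hf⟩ := (Finset.all_card_le_biUnion_card_iff_exists_injective t).mp hall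
  have hfE : ∀ p : (Σ i : L, Fin (bL i)), (p.1, (f p).1) ∈ E := by
    intro p
    have := hf p
    simpa only [t, Finset.mem_filter, Finset.mem_univ, true_and] using this
  refine ⟨fun e => (Finset.univ.filter (fun k : Fin (bL e.1) => (f ⟨e.1, k⟩).1 = e.2)).card,
    ?_, ?_, ?_⟩
  · rintro ⟨i, j⟩ hij
    simp only [Finset.card_eq_zero, Finset.filter_eq_empty_iff]
    intro k _
    intro hk
    exact hij (hk ▸ hfE ⟨i, k⟩)
  · intro i
    have := Finset.card_eq_sum_card_fiberwise
      (f := fun k : Fin (bL i) => (f ⟨i, k⟩).1) (s := Finset.univ) (t := Finset.univ)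
      (fun k _ => Finset.mem_univ _)
    simpa using this.symm
  · intro j
    have hsig : ((Finset.univ : Finset L).sigma
        (fun i => Finset.univ.filter (fun k : Fin (bL i) => (f ⟨i, k⟩).1 = j))) =
        Finset.univ.filter (fun p : Σ i : L, Fin (bL i) => (f p).1 = j) := by
      ext p
      cases p with
      | mk i k =>
        simp
    have hcard : ∑ i, (Finset.univ.filter (fun k : Fin (bL i) => (f ⟨i, k⟩).1 = j)).card =
        (Finset.univ.filter (fun p : Σ i : L, Fin (bL i) => (f p).1 = j)).card := by
      rw [← hsig, Finset.card_sigma]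
    rw [hcard]
    have hcard2 : (Finset.univ.filter (fun q : Σ j' : R, Fin (bR j') => q.1 = j)).card = bR j := by
      have : (({j} : Finset R).sigma (fun j' => (Finset.univ : Finset (Fin (bR j'))))) =
          Finset.univ.filter (fun q : Σ j' : R, Fin (bR j') => q.1 = j) := by
        ext q
        cases q with
        | mk a b => simp [eq_comm]
      rw [← this, Finset.card_sigma]
      simp
    rw [← hcard2]
    apply Finset.card_le_card_of_injOn f
    · intro p hp
      simp only [Finset.mem_coe, Finset.mem_filter, Finset.mem_univ, true_and] at hp ⊢
      exact hp
    · exact hfinj.injOn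
end
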